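/- With v_1, v_2, v_3 defined by the recursive Mex algorithm, for every n ≥ 0 one has v_1(n) - 2v_2(n) + v_3(n) ∈ {0, -1, -2}; equivalently, 0 ≤ 2v_2(n) - v_1(n) - v_3(n) ≤ 2. -/
import Mathlib

/-- Minimum excluded value of a set of natural numbers. -/
noncomputable def mex (S : Set ℕ) : ℕ := sInf {m : ℕ | m ∉ S}

/-- Coordinates of a set of triples. -/
def coords (G : Set (ℕ × ℕ × ℕ)) : Set ℕ :=
  {k | ∃ x ∈ G, k = x.1 ∨ k = x.2.1 ∨ k = x.2.2}

/-- Pairwise coordinate differences of a set of triples. -/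
def diffs (G : Set (ℕ × ℕ × ℕ)) : Set ℕ :=
  {d | ∃ x ∈ G, d = x.2.1 - x.1 ∨ d = x.2.2 - x.2.1 ∨ d = x.2.2 - x.1}

/-- One step of the Mex algorithm: the next P-position. -/
noncomputable def step (G : Set (ℕ × ℕ × ℕ)) : ℕ × ℕ × ℕ :=
  let F := coords G
  let D := diffs G
  let a := mex F
  let b := mex ((fun d => a + d) '' D ∪ Set.Icc 1 a ∪ F)
  let c := mex ((fun d => b + d) '' D ∪ Set.Icc 1 b ∪ F)
  (a, b, c)

/-- The sets `G_n` of P-positions computed by the Mex algorithm. -/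
noncomputable def Gset : ℕ → Set (ℕ × ℕ × ℕ)
  | 0 => {(0, 0, 0)}
  | n + 1 => Gset n ∪ {step (Gset n)}

/-- The `n`-th P-position `(v_1(n), v_2(n), v_3(n))`. -/
noncomputable def v : ℕ → ℕ × ℕ × ℕ
  | 0 => (0, 0, 0)
  | n + 1 => step (Gset n)

noncomputable def v1 (n : ℕ) : ℕ := (v n).1
noncomputable def v2 (n : ℕ) : ℕ := (v n).2.1
noncomputable def v3 (n : ℕ) : ℕ := (v n).2.2

/-- `F_n`: the set of coordinates of elements of `G_n`. -/
noncomputable def Fset (n : ℕ) : Set ℕ := coords (Gset n)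

/-- `D_n`: the set of pairwise coordinate differences over `G_n`. -/
noncomputable def Dset (n : ℕ) : Set ℕ := diffs (Gset n)

/-! ### auxiliary development -/

noncomputable def Av (n : ℕ) : ℕ := mex (Fset n)
noncomputable def Ev (n : ℕ) : ℕ := mex (Dset n)
noncomputable def Tt (n : ℕ) : Set ℕ :=
  (fun d => Av n + d) '' Dset n ∪ Set.Icc 1 (Av n) ∪ Fset n
noncomputable def Bv (n : ℕ) : ℕ := mex (Tt n)
noncomputable def Uu (n : ℕ) : Set ℕ :=
  (fun d => Bv n + d) '' Dset n ∪ Set.Icc 1 (Bv n) ∪ Fset n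
noncomputable def Cv (n : ℕ) : ℕ := mex (Uu n)

lemma v1_succ (n : ℕ) : v1 (n + 1) = Av n := rfl
lemma v2_succ (n : ℕ) : v2 (n + 1) = Bv n := rfl
lemma v3_succ (n : ℕ) : v3 (n + 1) = Cv n := rfl
lemma v1_zero : v1 0 = 0 := rfl
lemma v2_zero : v2 0 = 0 := rfl
lemma v3_zero : v3 0 = 0 := rfl

/-! mex lemmas -/

lemma mex_notMem {S : Set ℕ} (hS : S.Finite) : mex S ∉ S := by
  have h : Sᶜ.Nonempty := (Set.Finite.infinite_compl hS).nonempty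
  have := Nat.sInf_mem (s := {m : ℕ | m ∉ S}) h
  exact this

lemma mem_of_lt_mex {S : Set ℕ} {k : ℕ} (h : k < mex S) : k ∈ S := by
  by_contra h'
  exact absurd (Nat.sInf_le h') (not_le.2 h)

lemma mex_le {S : Set ℕ} {k : ℕ} (h : k ∉ S) : mex S ≤ k := Nat.sInf_le h

lemma le_mex {S : Set ℕ} (hS : S.Finite) {t : ℕ} (h : ∀ m < t, m ∈ S) : t ≤ mex S := by
  by_contra h'
  exact mex_notMem hS (h _ (not_le.1 h'))

lemma mex_mono {S S' : Set ℕ} (hS' : S'.Finite) (h : S ⊆ S') : mex S ≤ mex S' :=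
  le_mex hS' fun m hm => h (mem_of_lt_mex hm)

/-! Gset lemmas -/

lemma v_mem_Gset {m n : ℕ} (h : m ≤ n) : v m ∈ Gset n := by
  induction n with
  | zero => interval_cases m; exact rfl
  | succ n ih =>
    rcases Nat.le_succ_iff.mp h with h' | h'
    · exact Set.mem_union_left _ (ih h')
    · subst h'; exact Set.mem_union_right _ rfl

lemma mem_Gset {p : ℕ × ℕ × ℕ} {n : ℕ} (h : p ∈ Gset n) : ∃ m ≤ n, p = v m := by
  induction n with
  | zero => exact ⟨0, le_refl 0, h⟩
  | succ n ih =>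
    rcases h with h | h
    · obtain ⟨m, hm, rfl⟩ := ih h
      exact ⟨m, hm.trans (Nat.le_succ n), rfl⟩
    · exact ⟨n + 1, le_refl _, h⟩

lemma Gset_mono {m n : ℕ} (h : m ≤ n) : Gset m ⊆ Gset n := by
  intro p hp
  obtain ⟨k, hk, rfl⟩ := mem_Gset hp
  exact v_mem_Gset (hk.trans h)

/-! Fset / Dset structure -/

lemma mem_Fset_iff {k n : ℕ} :
    k ∈ Fset n ↔ ∃ m ≤ n, k = v1 m ∨ k = v2 m ∨ k = v3 m := by
  constructor
  · rintro ⟨x, hx, hk⟩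
    obtain ⟨m, hm, rfl⟩ := mem_Gset hx
    exact ⟨m, hm, hk⟩
  · rintro ⟨m, hm, hk⟩
    exact ⟨v m, v_mem_Gset hm, hk⟩

lemma mem_Dset_iff {k n : ℕ} :
    k ∈ Dset n ↔ ∃ m ≤ n, k = v2 m - v1 m ∨ k = v3 m - v2 m ∨ k = v3 m - v1 m := by
  constructor
  · rintro ⟨x, hx, hk⟩
    obtain ⟨m, hm, rfl⟩ := mem_Gset hx
    exact ⟨m, hm, hk⟩
  · rintro ⟨m, hm, hk⟩
    exact ⟨v m, v_mem_Gset hm, hk⟩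

lemma Fset_mono {m n : ℕ} (h : m ≤ n) : Fset m ⊆ Fset n := by
  rintro k ⟨x, hx, hk⟩
  exact ⟨x, Gset_mono h hx, hk⟩

lemma Dset_mono {m n : ℕ} (h : m ≤ n) : Dset m ⊆ Dset n := by
  rintro k ⟨x, hx, hk⟩
  exact ⟨x, Gset_mono h hx, hk⟩

lemma Fset_finite (n : ℕ) : (Fset n).Finite := by
  have : Fset n ⊆ (v1 '' Set.Iic n ∪ v2 '' Set.Iic n ∪ v3 '' Set.Iic n) := by
    intro k hk
    obtain ⟨m, hm, hk⟩ := mem_Fset_iff.mp hk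
    rcases hk with h | h | h
    · exact Or.inl (Or.inl ⟨m, hm, h.symm⟩)
    · exact Or.inl (Or.inr ⟨m, hm, h.symm⟩)
    · exact Or.inr ⟨m, hm, h.symm⟩
  exact Set.Finite.subset (((Set.finite_Iic n).image v1 |>.union
    ((Set.finite_Iic n).image v2)).union ((Set.finite_Iic n).image v3)) this

lemma Dset_finite (n : ℕ) : (Dset n).Finite := by
  have : Dset n ⊆ ((fun m => v2 m - v1 m) '' Set.Iic n ∪ (fun m => v3 m - v2 m) '' Set.Iic n
      ∪ (fun m => v3 m - v1 m) '' Set.Iic n) := by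
    intro k hk
    obtain ⟨m, hm, hk⟩ := mem_Dset_iff.mp hk
    rcases hk with h | h | h
    · exact Or.inl (Or.inl ⟨m, hm, h.symm⟩)
    · exact Or.inl (Or.inr ⟨m, hm, h.symm⟩)
    · exact Or.inr ⟨m, hm, h.symm⟩
  exact Set.Finite.subset (((Set.finite_Iic n).image _ |>.union
    ((Set.finite_Iic n).image _)).union ((Set.finite_Iic n).image _)) this

lemma Tt_finite (n : ℕ) : (Tt n).Finite :=
  (((Dset_finite n).image _).union (Set.finite_Icc 1 (Av n))).union (Fset_finite n)

lemma Uu_finite (n : ℕ) : (Uu n).Finite :=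
  (((Dset_finite n).image _).union (Set.finite_Icc 1 (Bv n))).union (Fset_finite n)

lemma mem_Tt_iff {n m : ℕ} :
    m ∈ Tt n ↔ (∃ d ∈ Dset n, m = Av n + d) ∨ (1 ≤ m ∧ m ≤ Av n) ∨ m ∈ Fset n := by
  constructor
  · rintro ((⟨d, hd, he⟩ | h) | h)
    · exact Or.inl ⟨d, hd, he.symm⟩
    · exact Or.inr (Or.inl (Set.mem_Icc.mp h))
    · exact Or.inr (Or.inr h)
  · rintro (⟨d, hd, he⟩ | h | h)
    · exact Or.inl (Or.inl ⟨d, hd, he.symm⟩)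
    · exact Or.inl (Or.inr (Set.mem_Icc.mpr h))
    · exact Or.inr h

lemma mem_Uu_iff {n m : ℕ} :
    m ∈ Uu n ↔ (∃ d ∈ Dset n, m = Bv n + d) ∨ (1 ≤ m ∧ m ≤ Bv n) ∨ m ∈ Fset n := by
  constructor
  · rintro ((⟨d, hd, he⟩ | h) | h)
    · exact Or.inl ⟨d, hd, he.symm⟩
    · exact Or.inr (Or.inl (Set.mem_Icc.mp h))
    · exact Or.inr (Or.inr h)
  · rintro (⟨d, hd, he⟩ | h | h)
    · exact Or.inl (Or.inl ⟨d, hd, he.symm⟩)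
    · exact Or.inl (Or.inr (Set.mem_Icc.mpr h))
    · exact Or.inr h

lemma zero_mem_Fset (n : ℕ) : 0 ∈ Fset n :=
  mem_Fset_iff.mpr ⟨0, Nat.zero_le n, Or.inl rfl⟩

lemma zero_mem_Dset (n : ℕ) : 0 ∈ Dset n :=
  mem_Dset_iff.mpr ⟨0, Nat.zero_le n, Or.inl rfl⟩

lemma Av_pos (n : ℕ) : 1 ≤ Av n :=
  le_mex (Fset_finite n) (by intro m hm; interval_cases m; exact zero_mem_Fset n)

lemma Ev_pos (n : ℕ) : 1 ≤ Ev n :=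
  le_mex (Dset_finite n) (by intro m hm; interval_cases m; exact zero_mem_Dset n)

lemma Av_mono {m n : ℕ} (h : m ≤ n) : Av m ≤ Av n :=
  mex_mono (Fset_finite n) (Fset_mono h)

lemma Ev_mono {m n : ℕ} (h : m ≤ n) : Ev m ≤ Ev n :=
  mex_mono (Dset_finite n) (Dset_mono h)

lemma Av_mem_Fset {i n : ℕ} (h : i < n) : Av i ∈ Fset n :=
  mem_Fset_iff.mpr ⟨i + 1, h, Or.inl (v1_succ i).symm⟩

lemma Bv_mem_Fset {i n : ℕ} (h : i < n) : Bv i ∈ Fset n :=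
  mem_Fset_iff.mpr ⟨i + 1, h, Or.inr (Or.inl (v2_succ i).symm)⟩

lemma Cv_mem_Fset {i n : ℕ} (h : i < n) : Cv i ∈ Fset n :=
  mem_Fset_iff.mpr ⟨i + 1, h, Or.inr (Or.inr (v3_succ i).symm)⟩

lemma Av_lt {i n : ℕ} (h : i < n) : Av i < Av n := by
  refine lt_of_le_of_ne (Av_mono h.le) fun he => mex_notMem (Fset_finite n) ?_
  have := Av_mem_Fset h
  rwa [he] at this
def MyInv (n : ℕ) : Prop :=
  Av n + Ev n ≤ Bv n ∧ Bv n ≤ Av n + Ev n + 2 ∧ Cv n = Bv n + Ev n ∧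
    Bv n + 1 ≤ Av n + Ev (n + 1)

lemma inv_all : ∀ n : ℕ, MyInv n := by
  intro n
  induction n using Nat.strong_induction_on with
  | _ n ih =>
  have hA1 := Av_pos n
  have hE1 := Ev_pos n
  have hEmemDn : ∀ i, i < n → Ev i ∈ Dset n := by
    intro i hi
    refine mem_Dset_iff.mpr ⟨i + 1, hi, Or.inr (Or.inl ?_)⟩
    rw [v3_succ, v2_succ, (ih i hi).2.2.1]; omega
  have hElt : ∀ i, i < n → Ev i < Ev n := by
    intro i hi
    refine lt_of_le_of_ne (Ev_mono hi.le) fun he => mex_notMem (Dset_finite n) ?_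
    have := hEmemDn i hi; rwa [he] at this
  have hBiBound : ∀ i, i < n → Bv i < Av n + Ev n := by
    intro i hi
    obtain ⟨h1, h2, h3, h4⟩ := ih i hi
    have h5 : Av i < Av n := Av_lt hi
    have h6 : Ev i < Ev n := hElt i hi
    have h7 : Ev (i + 1) ≤ Ev n := Ev_mono hi
    omega
  have hBstep : ∀ i, i + 1 < n → Bv i + 2 ≤ Bv (i + 1) := by
    intro i hi
    have h1 := (ih (i + 1) hi).1
    have h2 := (ih i (by omega)).2.2.2
    have h3 : Av i < Av (i + 1) := Av_lt (Nat.lt_succ_self i)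
    omega
  have hEstep : ∀ i, i < n → Ev i < Ev (i + 1) := by
    intro i hi
    have hmem : Ev i ∈ Dset (i + 1) := by
      refine mem_Dset_iff.mpr ⟨i + 1, le_refl _, Or.inr (Or.inl ?_)⟩
      rw [v3_succ, v2_succ, (ih i hi).2.2.1]; omega
    refine lt_of_le_of_ne (Ev_mono (Nat.le_succ i)) fun he => mex_notMem (Dset_finite (i + 1)) ?_
    rwa [he] at hmem
  have hCstep : ∀ i, i + 1 < n → Cv i + 3 ≤ Cv (i + 1) := by
    intro i hi
    have h1 := hBstep i hi
    have h2 := hEstep i (by omega)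
    have h3 := (ih (i + 1) hi).2.2.1
    have h4 := (ih i (by omega)).2.2.1
    omega
  have hCge : ∀ j, j < n → ∀ i, i < j → Cv i + 3 ≤ Cv j := by
    intro j
    induction j with
    | zero => intro _ i hi; omega
    | succ j ihj =>
      intro hj i hi
      rcases Nat.lt_succ_iff_lt_or_eq.mp hi with h | h
      · have h2 := ihj (by omega) i h
        have h3 := hCstep j (by omega)
        omega
      · subst h; exact hCstep i (by omega)
  have hWin : Av n + Ev n ∈ Fset n → ∀ j, 1 ≤ j → j ≤ 2 → Av n + Ev n + j ∉ Fset n := by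
    intro hx j hj1 hj2 hy
    obtain ⟨m, hm, hc⟩ := mem_Fset_iff.mp hx
    rcases m with _ | i
    · rw [v1_zero, v2_zero, v3_zero] at hc
      rcases hc with h | h | h <;> omega
    have hi : i < n := hm
    rw [v1_succ, v2_succ, v3_succ] at hc
    have hAi := Av_lt hi
    have hBi := hBiBound i hi
    have hx' : Av n + Ev n = Cv i := by rcases hc with h | h | h; omega; omega; exact h
    obtain ⟨m', hm', hc'⟩ := mem_Fset_iff.mp hy
    rcases m' with _ | i'
    · rw [v1_zero, v2_zero, v3_zero] at hc'
      rcases hc' with h | h | h <;> omega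
    have hi' : i' < n := hm'
    rw [v1_succ, v2_succ, v3_succ] at hc'
    have hAi' := Av_lt hi'
    have hBi' := hBiBound i' hi'
    have hy' : Av n + Ev n + j = Cv i' := by rcases hc' with h | h | h; omega; omega; exact h
    rcases Nat.lt_trichotomy i i' with h | h | h
    · have := hCge i' hi' i h; omega
    · subst h; omega
    · have := hCge i hi i' h; omega
  have hTmem : ∀ m, m < Bv n → m ∈ Tt n := fun m hm => mem_of_lt_mex hm
  have hs1 : Av n + Ev n < Bv n → Av n + Ev n ∈ Fset n := by
    intro h
    rcases mem_Tt_iff.mp (hTmem _ h) with ⟨d, hd, he⟩ | h' | h'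
    · have hde : d = Ev n := by omega
      rw [hde] at hd
      exact absurd hd (mex_notMem (Dset_finite n))
    · omega
    · exact h'
  have hs2 : Av n + Ev n + 1 < Bv n → Ev n + 1 ∈ Dset n := by
    intro h
    have hxF := hs1 (by omega)
    rcases mem_Tt_iff.mp (hTmem _ (by omega : Av n + Ev n + 1 < Bv n)) with ⟨d, hd, he⟩ | h' | h'
    · have hde : d = Ev n + 1 := by omega
      rwa [hde] at hd
    · omega
    · exact absurd h' (hWin hxF 1 (by norm_num) (by norm_num))
  have hs3 : Av n + Ev n + 2 < Bv n → Ev n + 2 ∈ Dset n := by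
    intro h
    have hxF := hs1 (by omega)
    rcases mem_Tt_iff.mp (hTmem _ (by omega : Av n + Ev n + 2 < Bv n)) with ⟨d, hd, he⟩ | h' | h'
    · have hde : d = Ev n + 2 := by omega
      rwa [hde] at hd
    · omega
    · exact absurd h' (hWin hxF 2 (by norm_num) (by norm_num))
  have hdType : ∀ i, i < n → Bv i ≤ Av i + Ev n := by
    intro i hi
    obtain ⟨h1, h2, h3, h4⟩ := ih i hi
    have h6 := hElt i hi
    have h7 : Ev (i + 1) ≤ Ev n := Ev_mono hi
    omega
  have hBlow : Av n + Ev n ≤ Bv n := by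
    apply le_mex (Tt_finite n)
    intro m hm
    rcases Nat.lt_or_ge (Av n) m with h | h
    · have hd : m - Av n < Ev n := by omega
      exact mem_Tt_iff.mpr (Or.inl ⟨m - Av n, mem_of_lt_mex hd, by omega⟩)
    · rcases Nat.eq_zero_or_pos m with rfl | hpos
      · exact mem_Tt_iff.mpr (Or.inr (Or.inr (zero_mem_Fset n)))
      · exact mem_Tt_iff.mpr (Or.inr (Or.inl ⟨hpos, h⟩))
  have hBup : Bv n ≤ Av n + Ev n + 2 := by
    by_contra hcon
    push_neg at hcon
    have hD1 := hs2 (by omega)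
    have hD2 := hs3 (by omega)
    have key : ∀ p q, p < q → q < n → Bv p + Ev p + Av q + 2 ≤ Bv q + Ev q + Av p := by
      intro p q hpq hq
      have h1 := (ih p (lt_trans hpq hq)).2.2.2
      have h2 : Ev (p + 1) ≤ Ev q := Ev_mono hpq
      have h3 := (ih q hq).1
      have h4 := (ih p (lt_trans hpq hq)).1
      omega
    obtain ⟨m1, hm1, hc1⟩ := mem_Dset_iff.mp hD1
    obtain ⟨m2, hm2, hc2⟩ := mem_Dset_iff.mp hD2
    rcases m1 with _ | i
    · rw [v1_zero, v2_zero, v3_zero] at hc1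
      rcases hc1 with h | h | h <;> omega
    rcases m2 with _ | i'
    · rw [v1_zero, v2_zero, v3_zero] at hc2
      rcases hc2 with h | h | h <;> omega
    have hi : i < n := hm1
    have hi' : i' < n := hm2
    rw [v1_succ, v2_succ, v3_succ] at hc1 hc2
    obtain ⟨g1, g2, g3, g4⟩ := ih i hi
    obtain ⟨g1', g2', g3', g4'⟩ := ih i' hi'
    have hd_i := hdType i hi
    have hd_i' := hdType i' hi'
    have hE_i := hElt i hi
    have hE_i' := hElt i' hi'
    have hs_i : Ev n + 1 + Av i = Bv i + Ev i := by
      rw [g3] at hc1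
      rcases hc1 with h | h | h <;> omega
    have hs_i' : Ev n + 2 + Av i' = Bv i' + Ev i' := by
      rw [g3'] at hc2
      rcases hc2 with h | h | h <;> omega
    rcases Nat.lt_trichotomy i i' with h | h | h
    · have := key i i' h hi'; omega
    · subst h; omega
    · have := key i' i h hi; omega
  have hCn : Cv n = Bv n + Ev n := by
    apply le_antisymm
    · refine mex_le ?_
      intro hmem
      rcases mem_Uu_iff.mp hmem with ⟨d, hd, he⟩ | h | h
      · have hde : d = Ev n := by omega
        rw [hde] at hd
        exact mex_notMem (Dset_finite n) hd
      · omega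
      · obtain ⟨m, hm, hc⟩ := mem_Fset_iff.mp h
        rcases m with _ | i
        · rw [v1_zero, v2_zero, v3_zero] at hc
          rcases hc with h' | h' | h' <;> omega
        have hi : i < n := hm
        rw [v1_succ, v2_succ, v3_succ] at hc
        have h5 := Av_lt hi
        have h6 := hBiBound i hi
        have h7 := hElt i hi
        have h8 := (ih i hi).2.2.1
        rcases hc with h' | h' | h' <;> omega
    · apply le_mex (Uu_finite n)
      intro m hm
      rcases Nat.lt_or_ge (Bv n) m with h | h
      · have hd : m - Bv n < Ev n := by omega
        exact mem_Uu_iff.mpr (Or.inl ⟨m - Bv n, mem_of_lt_mex hd, by omega⟩)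
      · rcases Nat.eq_zero_or_pos m with rfl | hpos
        · exact mem_Uu_iff.mpr (Or.inr (Or.inr (zero_mem_Fset n)))
        · exact mem_Uu_iff.mpr (Or.inr (Or.inl ⟨hpos, h⟩))
  have hIV : Bv n + 1 ≤ Av n + Ev (n + 1) := by
    have hsub : ∀ m, m ≤ Bv n - Av n → m ∈ Dset (n + 1) := by
      intro m hm
      rcases Nat.lt_or_ge m (Ev n) with h | h
      · exact Dset_mono (Nat.le_succ n) (mem_of_lt_mex h)
      rcases Nat.eq_or_lt_of_le h with he | h'
      · refine mem_Dset_iff.mpr ⟨n + 1, le_refl _, Or.inr (Or.inl ?_)⟩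
        rw [v3_succ, v2_succ, hCn]; omega
      rcases eq_or_ne m (Bv n - Av n) with he | hne
      · refine mem_Dset_iff.mpr ⟨n + 1, le_refl _, Or.inl ?_⟩
        rw [v2_succ, v1_succ]; omega
      · have h1 : m = Ev n + 1 := by omega
        have h2 := hs2 (by omega)
        rw [h1]
        exact Dset_mono (Nat.le_succ n) h2
    have : Bv n - Av n + 1 ≤ Ev (n + 1) :=
      le_mex (Dset_finite (n + 1)) fun m hm => hsub m (by omega)
    omega
  exact ⟨hBlow, hBup, hCn, hIV⟩

theorem stmt9 : ∀ n : ℕ,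
    (v1 n : ℤ) - 2 * v2 n + v3 n ∈ ({0, -1, -2} : Set ℤ) := by
  intro n
  rcases n with _ | n
  · rw [v1_zero, v2_zero, v3_zero]
    simp
  · obtain ⟨h1, h2, h3, _⟩ := inv_all n
    rw [v1_succ, v2_succ, v3_succ]
    simp only [Set.mem_insert_iff, Set.mem_singleton_iff]
    rw [h3]
    push_cast
    omega
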